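/- Define w_{p,q}(m) for integers p,q ≥ 0 by w_{p,q}(m) = number of lower-order ideals of width m in the poset {(i,j) : 1 ≤ i ≤ p < j ≤ p+q} with (i,j) ≤ (i',j') iff i ≥ i', j ≤ j'. Then w_{p,q} is symmetric in p and q, and for p ≤ q satisfies: w_{p,q}(m) = w_{p−1,q}(m) + w_{p,q−1}(m−1) if m < p, and w_{p,q}(p) = w_{p,q−1}(p) + w_{p,q−1}(p−1). -/

import Mathlib

namespace Stmt7

/-- The order `(i,j) ≤ (i',j')` iff `i ≥ i'` and `j ≤ j'`. -/
def le (a b : ℕ × ℕ) : Prop := b.1 ≤ a.1 ∧ a.2 ≤ b.2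

/-- The poset `{(i,j) : 1 ≤ i ≤ p < j ≤ p+q}`. -/
def P (p q : ℕ) : Finset (ℕ × ℕ) := Finset.Icc 1 p ×ˢ Finset.Icc (p + 1) (p + q)

def IsLowerIdeal (p q : ℕ) (Y : Finset (ℕ × ℕ)) : Prop :=
  Y ⊆ P p q ∧ ∀ x ∈ P p q, ∀ y ∈ Y, le x y → x ∈ Y

def IsAntichainIn (Y A : Finset (ℕ × ℕ)) : Prop :=
  A ⊆ Y ∧ ∀ a ∈ A, ∀ b ∈ A, a ≠ b → ¬ le a b ∧ ¬ le b a

def WidthIs (Y : Finset (ℕ × ℕ)) (m : ℕ) : Prop :=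
  (∃ A, IsAntichainIn Y A ∧ A.card = m) ∧ ∀ A, IsAntichainIn Y A → A.card ≤ m

/-- `w_{p,q}(m)`: the number of lower-order ideals of width `m`. -/
noncomputable def w (p q m : ℕ) : ℕ :=
  Nat.card {Y : Finset (ℕ × ℕ) // IsLowerIdeal p q Y ∧ WidthIs Y m}

-- basics

lemma mem_P {p q : ℕ} {x : ℕ × ℕ} :
    x ∈ P p q ↔ 1 ≤ x.1 ∧ x.1 ≤ p ∧ p + 1 ≤ x.2 ∧ x.2 ≤ p + q := by
  simp [P, Finset.mem_Icc, and_assoc]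

lemma ideal_closed {p q : ℕ} {Y : Finset (ℕ × ℕ)} (h : IsLowerIdeal p q Y)
    {i j i' j' : ℕ} (hij : (i, j) ∈ Y) (h1 : 1 ≤ i') (h2 : i ≤ i') (h3 : i' ≤ p)
    (h4 : p + 1 ≤ j') (h5 : j' ≤ j) : (i', j') ∈ Y := by
  have hP := mem_P.1 (h.1 hij)
  exact h.2 (i', j') (mem_P.2 ⟨h1, h3, h4, le_trans h5 hP.2.2.2⟩) (i, j) hij ⟨h2, h5⟩

lemma antichain_snd_ne {Y A : Finset (ℕ × ℕ)} (hA : IsAntichainIn Y A)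
    {a b : ℕ × ℕ} (ha : a ∈ A) (hb : b ∈ A) (hne : a ≠ b) : a.1 ≠ b.1 ∧ a.2 ≠ b.2 := by
  obtain ⟨h1, h2⟩ := hA.2 a ha b hb hne
  unfold le at h1 h2
  constructor <;> intro hx <;> rcases le_total a.1 b.1 <;> rcases le_total a.2 b.2 <;> omega

-- lam

noncomputable def lam (Y : Finset (ℕ × ℕ)) (i : ℕ) : ℕ :=
  (Y.filter (fun x => x.1 = i)).card

lemma interval_of_closed (s : Finset ℕ) (a : ℕ) (ha : 1 ≤ a)
    (hsub : ∀ j ∈ s, a ≤ j) (hdc : ∀ j ∈ s, ∀ j', a ≤ j' → j' ≤ j → j' ∈ s) :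
    s = Finset.Icc a (a + s.card - 1) := by
  rcases s.eq_empty_or_nonempty with rfl | hne
  · simp only [Finset.card_empty]
    rw [Finset.Icc_eq_empty]; omega
  · have hM : s.max' hne ∈ s := s.max'_mem hne
    have haM : a ≤ s.max' hne := hsub _ hM
    have hseq : s = Finset.Icc a (s.max' hne) := by
      apply Finset.ext; intro j
      simp only [Finset.mem_Icc]
      constructor
      · intro hj; exact ⟨hsub _ hj, s.le_max' _ hj⟩
      · intro hj; exact hdc _ hM _ hj.1 hj.2
    have hc : s.card = s.max' hne + 1 - a := by
      conv_lhs => rw [hseq]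
      rw [Nat.card_Icc]
    rw [hc]
    conv_lhs => rw [hseq]
    congr 1
    omega

lemma lam_spec {p q : ℕ} {Y : Finset (ℕ × ℕ)} (hY : IsLowerIdeal p q Y)
    {i : ℕ} (hi1 : 1 ≤ i) (hi2 : i ≤ p) :
    ∀ t, 1 ≤ t → ((i, p + t) ∈ Y ↔ t ≤ lam Y i) := by
  classical
  set s := (Y.filter (fun x => x.1 = i)).image Prod.snd with hs
  have hmem : ∀ j, j ∈ s ↔ (i, j) ∈ Y := by
    intro j
    simp only [hs, Finset.mem_image, Finset.mem_filter]
    constructor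
    · rintro ⟨x, ⟨hx, hx1⟩, hx2⟩
      have : x = (i, j) := Prod.ext hx1 hx2
      rwa [this] at hx
    · intro hj; exact ⟨(i, j), ⟨hj, rfl⟩, rfl⟩
  have hcard : s.card = lam Y i := by
    rw [hs, lam, Finset.card_image_of_injOn]
    intro x hx y hy hxy
    simp only [Finset.coe_filter, Set.mem_setOf_eq] at hx hy
    exact Prod.ext (hx.2.trans hy.2.symm) hxy
  have hsub : ∀ j ∈ s, p + 1 ≤ j := by
    intro j hj
    exact (mem_P.1 (hY.1 ((hmem j).1 hj))).2.2.1
  have hdc : ∀ j ∈ s, ∀ j', p + 1 ≤ j' → j' ≤ j → j' ∈ s := by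
    intro j hj j' h1 h2
    rw [hmem]
    exact ideal_closed hY ((hmem j).1 hj) hi1 le_rfl hi2 h1 h2
  have hint := interval_of_closed s (p + 1) (by omega) hsub hdc
  intro t ht
  rw [← hmem, hint, Finset.mem_Icc, hcard]
  omega

lemma lam_unique {p q : ℕ} {Y : Finset (ℕ × ℕ)} (hY : IsLowerIdeal p q Y)
    {i : ℕ} (hi1 : 1 ≤ i) (hi2 : i ≤ p) {g : ℕ}
    (hg : ∀ t, 1 ≤ t → ((i, p + t) ∈ Y ↔ t ≤ g)) : lam Y i = g := by
  have hspec := lam_spec hY hi1 hi2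
  rcases Nat.eq_zero_or_pos (lam Y i) with h0 | h1
  · rcases Nat.eq_zero_or_pos g with g0 | g1
    · omega
    · exfalso
      have := (hg 1 le_rfl).2 g1
      have := (hspec 1 le_rfl).1 this
      omega
  · have h2 : lam Y i ≤ g := (hg _ h1).1 ((hspec _ h1).2 le_rfl)
    rcases Nat.eq_zero_or_pos g with g0 | g1
    · omega
    · have h3 : g ≤ lam Y i := (hspec _ g1).1 ((hg _ g1).2 le_rfl)
      omega


-- width machinery

noncomputable def Dp (p : ℕ) (Y : Finset (ℕ × ℕ)) : ℕ :=
  (Finset.Icc 1 p).sup (fun k => k - lam Y k)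

lemma Dp_le (p : ℕ) (Y : Finset (ℕ × ℕ)) : Dp p Y ≤ p := by
  apply Finset.sup_le
  intro k hk
  rw [Finset.mem_Icc] at hk
  omega

lemma card_le_bound {p q : ℕ} {Y : Finset (ℕ × ℕ)} (hY : IsLowerIdeal p q Y)
    {A : Finset (ℕ × ℕ)} (hA : IsAntichainIn Y A) {k : ℕ} (hk1 : 1 ≤ k) (hk2 : k ≤ p) :
    A.card ≤ lam Y k + (p - k) := by
  classical
  have hsplit : (A.filter (fun a => a.1 ≤ k)).card
      + (A.filter (fun a => ¬ a.1 ≤ k)).card = A.card :=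
    Finset.card_filter_add_card_filter_not _
  have h1 : (A.filter (fun a => a.1 ≤ k)).card ≤ lam Y k := by
    rw [lam]
    apply Finset.card_le_card_of_injOn (fun a => (k, a.2))
    · intro a ha
      rw [Finset.mem_coe, Finset.mem_filter] at ha ⊢
      obtain ⟨haA, hak⟩ := ha
      have haY := hA.1 haA
      have haP := mem_P.1 (hY.1 haY)
      have : (a.1, a.2) ∈ Y := by rwa [Prod.mk.eta]
      exact ⟨ideal_closed hY this hk1 hak hk2 haP.2.2.1 le_rfl, rfl⟩
    · intro a ha b hb hab
      simp only [Finset.coe_filter, Set.mem_setOf_eq] at ha hb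
      have h2 : a.2 = b.2 := by simpa using hab
      by_contra hne
      exact (antichain_snd_ne hA ha.1 hb.1 hne).2 h2
  have h2 : (A.filter (fun a => ¬ a.1 ≤ k)).card ≤ p - k := by
    have : (A.filter (fun a => ¬ a.1 ≤ k)).card ≤ (Finset.Icc (k+1) p).card := by
      apply Finset.card_le_card_of_injOn (fun a => a.1)
      · intro a ha
        rw [Finset.mem_coe, Finset.mem_filter] at ha
        have haP := mem_P.1 (hY.1 (hA.1 ha.1))
        simp only [Finset.mem_coe, Finset.mem_Icc]
        omega
      · intro a ha b hb hab
        simp only [Finset.coe_filter, Set.mem_setOf_eq] at ha hb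
        by_contra hne
        exact (antichain_snd_ne hA ha.1 hb.1 hne).1 hab
    rwa [Nat.card_Icc, Nat.add_sub_add_right] at this
  omega

lemma widthIs_width {p q : ℕ} {Y : Finset (ℕ × ℕ)} (hY : IsLowerIdeal p q Y) :
    WidthIs Y (p - Dp p Y) := by
  classical
  rcases Nat.eq_zero_or_pos p with rfl | hp
  · have hYe : Y = ∅ := by
      apply Finset.eq_empty_of_forall_notMem
      intro x hx
      have := mem_P.1 (hY.1 hx)
      omega
    subst hYe
    constructor
    · exact ⟨∅, ⟨Finset.empty_subset _, by simp⟩, by simp⟩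
    · intro A hA
      have : A = ∅ := Finset.subset_empty.1 hA.1
      simp [this]
  · have hDle := Dp_le p Y
    constructor
    · -- canonical antichain
      set D := Dp p Y with hD
      refine ⟨(Finset.Icc 1 (p - D)).image (fun t => (D + t, p + t)), ⟨?_, ?_⟩, ?_⟩
      · intro x hx
        rw [Finset.mem_image] at hx
        obtain ⟨t, ht, rfl⟩ := hx
        rw [Finset.mem_Icc] at ht
        have hmem : D + t ∈ Finset.Icc 1 p := by rw [Finset.mem_Icc]; omega
        have hsup : (D + t) - lam Y (D + t) ≤ D := by
          rw [hD, Dp]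
          exact Finset.le_sup (f := fun k => k - lam Y k) hmem
        have hlam : t ≤ lam Y (D + t) := by omega
        exact (lam_spec hY (by omega) (by omega) t (by omega)).2 hlam
      · intro a ha b hb hne
        rw [Finset.mem_image] at ha hb
        obtain ⟨t, ht, rfl⟩ := ha
        obtain ⟨s, hs, rfl⟩ := hb
        have hts : t ≠ s := by rintro rfl; exact hne rfl
        unfold le
        simp only
        omega
      · rw [Finset.card_image_of_injOn, Nat.card_Icc]
        · omega
        · intro a ha b hb hab
          simp only [Prod.mk.injEq] at hab
          omega
    · intro A hA
      obtain ⟨k₀, hk₀mem, hk₀⟩ := Finset.exists_mem_eq_sup (Finset.Icc 1 p)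
        ⟨1, Finset.mem_Icc.2 ⟨le_rfl, hp⟩⟩ (fun k => k - lam Y k)
      rw [Finset.mem_Icc] at hk₀mem
      have hb := card_le_bound hY hA hk₀mem.1 hk₀mem.2
      have hDp : Dp p Y = k₀ - lam Y k₀ := hk₀
      rcases le_or_gt (lam Y k₀) k₀ with hc | hc
      · omega
      · -- Dp = 0, need card A ≤ p
        have hcard : A.card ≤ p := by
          have : A.card ≤ (Finset.Icc 1 p).card := by
            apply Finset.card_le_card_of_injOn (fun a => a.1)
            · intro a ha
              have haP := mem_P.1 (hY.1 (hA.1 ha))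
              simp only [Finset.mem_coe, Finset.mem_Icc]
              omega
            · intro a ha b hb hab
              by_contra hne
              exact (antichain_snd_ne hA ha hb hne).1 hab
          rwa [Nat.card_Icc, Nat.add_sub_cancel] at this
        omega


lemma widthIs_unique {Y : Finset (ℕ × ℕ)} {m m' : ℕ}
    (h : WidthIs Y m) (h' : WidthIs Y m') : m = m' := by
  obtain ⟨A, hA, hAc⟩ := h.1
  obtain ⟨B, hB, hBc⟩ := h'.1
  have := h'.2 A hA
  have := h.2 B hB
  omega

lemma widthIs_iff {p q m : ℕ} {Y : Finset (ℕ × ℕ)} (hY : IsLowerIdeal p q Y) :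
    WidthIs Y m ↔ p - Dp p Y = m :=
  ⟨fun h => widthIs_unique (widthIs_width hY) h, fun h => h ▸ widthIs_width hY⟩

lemma widthIs_zero_not_mem {Y : Finset (ℕ × ℕ)} (h : WidthIs Y 0) {x : ℕ × ℕ}
    (hx : x ∈ Y) : False := by
  have hA : IsAntichainIn Y {x} := by
    constructor
    · intro a ha; rw [Finset.mem_singleton] at ha; rwa [ha]
    · intro a ha b hb hne
      rw [Finset.mem_singleton] at ha hb
      exact absurd (ha.trans hb.symm) hne
  have := h.2 _ hA
  simp at this

lemma widthIs_image {Y : Finset (ℕ × ℕ)} (e : ℕ × ℕ → ℕ × ℕ)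
    (hinj : ∀ a ∈ Y, ∀ b ∈ Y, e a = e b → a = b)
    (hle : ∀ a ∈ Y, ∀ b ∈ Y, (le a b ↔ le (e a) (e b)))
    {m : ℕ} (h : WidthIs Y m) : WidthIs (Y.image e) m := by
  classical
  constructor
  · obtain ⟨A, hA, hAc⟩ := h.1
    refine ⟨A.image e, ⟨?_, ?_⟩, ?_⟩
    · exact Finset.image_subset_image hA.1
    · intro a' ha' b' hb' hne
      rw [Finset.mem_image] at ha' hb'
      obtain ⟨a, ha, rfl⟩ := ha'
      obtain ⟨b, hb, rfl⟩ := hb'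
      have haY := hA.1 ha
      have hbY := hA.1 hb
      have hab : a ≠ b := by rintro rfl; exact hne rfl
      obtain ⟨u1, u2⟩ := hA.2 a ha b hb hab
      exact ⟨fun hc => u1 ((hle a haY b hbY).2 hc), fun hc => u2 ((hle b hbY a haY).2 hc)⟩
    · rw [Finset.card_image_of_injOn, hAc]
      intro a ha b hb
      exact hinj a (hA.1 ha) b (hA.1 hb)
  · intro B hB
    set A := Y.filter (fun a => e a ∈ B) with hAdef
    have hAY : A ⊆ Y := Finset.filter_subset _ _
    have himg : A.image e = B := by
      apply Finset.Subset.antisymm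
      · intro b hb
        rw [Finset.mem_image] at hb
        obtain ⟨a, ha, rfl⟩ := hb
        exact (Finset.mem_filter.1 ha).2
      · intro b hb
        have hbY := hB.1 hb
        rw [Finset.mem_image] at hbY ⊢
        obtain ⟨a, ha, rfl⟩ := hbY
        exact ⟨a, Finset.mem_filter.2 ⟨ha, hb⟩, rfl⟩
    have hcard : A.card = B.card := by
      rw [← himg, Finset.card_image_of_injOn]
      intro a ha b hb
      exact hinj a (hAY ha) b (hAY hb)
    have hAanti : IsAntichainIn Y A := by
      refine ⟨hAY, ?_⟩
      intro a ha b hb hne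
      have haY := hAY ha
      have hbY := hAY hb
      have hene : e a ≠ e b := fun hc => hne (hinj a haY b hbY hc)
      obtain ⟨u1, u2⟩ := hB.2 (e a) (Finset.mem_filter.1 ha).2 (e b) (Finset.mem_filter.1 hb).2 hene
      exact ⟨fun hc => u1 ((hle a haY b hbY).1 hc), fun hc => u2 ((hle b hbY a haY).1 hc)⟩
    rw [← hcard]
    exact h.2 A hAanti

-- row deletion / addition

noncomputable def shrink (p : ℕ) (Y : Finset (ℕ × ℕ)) : Finset (ℕ × ℕ) :=
  (Y.filter (fun x => p + 2 ≤ x.2)).image (fun x => (x.1, x.2 - 1))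

noncomputable def grow (p : ℕ) (Y : Finset (ℕ × ℕ)) : Finset (ℕ × ℕ) :=
  (Finset.Icc 1 p ×ˢ {p + 1}) ∪ Y.image (fun x => (x.1, x.2 + 1))

lemma mem_shrink {p : ℕ} {Y : Finset (ℕ × ℕ)} {i j : ℕ} :
    (i, j) ∈ shrink p Y ↔ (i, j + 1) ∈ Y ∧ p + 1 ≤ j := by
  unfold shrink
  rw [Finset.mem_image]
  constructor
  · rintro ⟨x, hx, hxe⟩
    rw [Finset.mem_filter] at hx
    obtain ⟨hxY, hx2⟩ := hx
    have h1 : x.1 = i := congrArg Prod.fst hxe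
    have h2 : x.2 - 1 = j := congrArg Prod.snd hxe
    have hx2j : x.2 = j + 1 := by omega
    constructor
    · have : x = (i, j + 1) := Prod.ext h1 hx2j
      rwa [this] at hxY
    · omega
  · rintro ⟨hY', hj⟩
    exact ⟨(i, j + 1), Finset.mem_filter.2 ⟨hY', by omega⟩, by simp⟩

lemma mem_grow {p q : ℕ} {Y : Finset (ℕ × ℕ)} (hYP : Y ⊆ P p q) {i j : ℕ} :
    (i, j) ∈ grow p Y ↔ (1 ≤ i ∧ i ≤ p ∧ j = p + 1) ∨ ((i, j - 1) ∈ Y ∧ p + 2 ≤ j) := by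
  unfold grow
  rw [Finset.mem_union, Finset.mem_image]
  constructor
  · rintro (h | ⟨x, hx, hxe⟩)
    · simp only [Finset.mem_product, Finset.mem_Icc, Finset.mem_singleton] at h
      exact Or.inl ⟨h.1.1, h.1.2, h.2⟩
    · have hxP := mem_P.1 (hYP hx)
      have h1 : x.1 = i := congrArg Prod.fst hxe
      have h2 : x.2 + 1 = j := congrArg Prod.snd hxe
      refine Or.inr ⟨?_, by omega⟩
      have : x = (i, j - 1) := Prod.ext h1 (by omega)
      rwa [this] at hx
  · rintro (⟨h1, h2, h3⟩ | ⟨hx, hj⟩)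
    · exact Or.inl (by simp only [Finset.mem_product, Finset.mem_Icc, Finset.mem_singleton]; omega)
    · exact Or.inr ⟨(i, j - 1), hx, Prod.ext rfl (by omega)⟩

lemma shrink_ideal {p q : ℕ} {Y : Finset (ℕ × ℕ)}
    (hY : IsLowerIdeal p (q + 1) Y) : IsLowerIdeal p q (shrink p Y) := by
  constructor
  · intro x hx
    obtain ⟨i, j⟩ := x
    rw [mem_shrink] at hx
    have := mem_P.1 (hY.1 hx.1)
    rw [mem_P]
    simp only at this ⊢
    omega
  · rintro ⟨i, j⟩ hx ⟨i', j'⟩ hy ⟨hle1, hle2⟩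
    rw [mem_P] at hx
    rw [mem_shrink] at hy ⊢
    simp only at hx hle1 hle2
    refine ⟨ideal_closed hY hy.1 (by omega) (by omega) (by omega) (by omega) (by omega), by omega⟩

lemma grow_ideal {p q : ℕ} {Y : Finset (ℕ × ℕ)} (hp : 1 ≤ p)
    (hY : IsLowerIdeal p q Y) :
    IsLowerIdeal p (q + 1) (grow p Y) ∧ (1, p + 1) ∈ grow p Y := by
  have hbot : (1, p + 1) ∈ grow p Y := (mem_grow hY.1).2 (Or.inl ⟨le_rfl, hp, rfl⟩)
  refine ⟨⟨?_, ?_⟩, hbot⟩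
  · intro x hx
    obtain ⟨i, j⟩ := x
    rw [mem_grow hY.1] at hx
    rw [mem_P]
    simp only
    rcases hx with ⟨h1, h2, h3⟩ | ⟨hx, hj⟩
    · omega
    · have := mem_P.1 (hY.1 hx)
      simp only at this
      omega
  · rintro ⟨i, j⟩ hx ⟨i', j'⟩ hy ⟨hle1, hle2⟩
    rw [mem_P] at hx
    rw [mem_grow hY.1] at hy ⊢
    simp only at hx hle1 hle2
    rcases Nat.lt_or_ge j (p + 2) with hj | hj
    · exact Or.inl (by omega)
    · refine Or.inr ⟨?_, hj⟩
      rcases hy with ⟨h1, h2, h3⟩ | ⟨hy', hj'⟩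
      · omega
      · exact ideal_closed hY hy' (by omega) (by omega) (by omega) (by omega) (by omega)

lemma grow_shrink {p q : ℕ} {Y : Finset (ℕ × ℕ)}
    (hY : IsLowerIdeal p (q + 1) Y) (hb : (1, p + 1) ∈ Y) :
    grow p (shrink p Y) = Y := by
  have hsub : shrink p Y ⊆ P p q := (shrink_ideal hY).1
  apply Finset.ext
  rintro ⟨i, j⟩
  rw [mem_grow hsub]
  constructor
  · rintro (⟨h1, h2, h3⟩ | ⟨hx, hj⟩)
    · subst h3
      exact ideal_closed hY hb h1 h1 h2 le_rfl le_rfl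
    · rw [mem_shrink] at hx
      have : j - 1 + 1 = j := by omega
      rw [this] at hx
      exact hx.1
  · intro hx
    have hxP := mem_P.1 (hY.1 hx)
    simp only at hxP
    rcases Nat.lt_or_ge j (p + 2) with hj | hj
    · exact Or.inl (by omega)
    · refine Or.inr ⟨?_, hj⟩
      rw [mem_shrink]
      have : j - 1 + 1 = j := by omega
      rw [this]
      exact ⟨hx, by omega⟩

lemma shrink_grow {p q : ℕ} {Y : Finset (ℕ × ℕ)} (hYP : Y ⊆ P p q) :
    shrink p (grow p Y) = Y := by
  apply Finset.ext
  rintro ⟨i, j⟩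
  rw [mem_shrink, mem_grow hYP]
  constructor
  · rintro ⟨(⟨h1, h2, h3⟩ | ⟨hx, hj⟩), hjj⟩
    · omega
    · have : j + 1 - 1 = j := by omega
      rwa [this] at hx
  · intro hx
    have hxP := mem_P.1 (hYP hx)
    simp only at hxP
    have : j + 1 - 1 = j := by omega
    refine ⟨Or.inr ⟨by rwa [this], by omega⟩, by omega⟩

lemma lam_ge_one {p q : ℕ} {Y : Finset (ℕ × ℕ)} (hY : IsLowerIdeal p (q + 1) Y)
    (hb : (1, p + 1) ∈ Y) {k : ℕ} (hk1 : 1 ≤ k) (hk2 : k ≤ p) : 1 ≤ lam Y k := by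
  have hmem : (k, p + 1) ∈ Y := ideal_closed hY hb hk1 hk1 hk2 le_rfl le_rfl
  exact (lam_spec hY hk1 hk2 1 le_rfl).1 hmem

lemma lam_shrink {p q : ℕ} {Y : Finset (ℕ × ℕ)} (hY : IsLowerIdeal p (q + 1) Y)
    (hb : (1, p + 1) ∈ Y) {i : ℕ} (hi1 : 1 ≤ i) (hi2 : i ≤ p) :
    lam (shrink p Y) i = lam Y i - 1 := by
  apply lam_unique (shrink_ideal hY) hi1 hi2
  intro t ht
  rw [mem_shrink]
  have h1 : (i, p + t + 1) ∈ Y ↔ t + 1 ≤ lam Y i := by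
    have := lam_spec hY hi1 hi2 (t + 1) (by omega)
    rwa [show p + (t + 1) = p + t + 1 by omega] at this
  have hge := lam_ge_one hY hb hi1 hi2
  constructor
  · rintro ⟨hmem, _⟩
    have := h1.1 hmem
    omega
  · intro hle
    exact ⟨h1.2 (by omega), by omega⟩

lemma Dp_shrink_rel {p q : ℕ} {Y : Finset (ℕ × ℕ)} (hY : IsLowerIdeal p (q + 1) Y)
    (hb : (1, p + 1) ∈ Y) :
    (1 ≤ Dp p Y → Dp p (shrink p Y) = Dp p Y + 1) ∧
    (Dp p Y = 0 → Dp p (shrink p Y) ≤ 1) ∧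
    (2 ≤ Dp p (shrink p Y) → Dp p Y = Dp p (shrink p Y) - 1) ∧
    (Dp p (shrink p Y) ≤ 1 → Dp p Y = 0) := by
  have hfun : ∀ k ∈ Finset.Icc 1 p, k - lam (shrink p Y) k = k - (lam Y k - 1) := by
    intro k hk
    rw [Finset.mem_Icc] at hk
    rw [lam_shrink hY hb hk.1 hk.2]
  have hD' : Dp p (shrink p Y) = (Finset.Icc 1 p).sup (fun k => k - (lam Y k - 1)) := by
    unfold Dp
    exact Finset.sup_congr rfl hfun
  have hge1 : ∀ k ∈ Finset.Icc 1 p, 1 ≤ lam Y k := by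
    intro k hk
    rw [Finset.mem_Icc] at hk
    exact lam_ge_one hY hb hk.1 hk.2
  set D := Dp p Y with hDdef
  set E := (Finset.Icc 1 p).sup (fun k => k - (lam Y k - 1)) with hEdef
  -- E ≤ D + 1
  have hA : E ≤ D + 1 := by
    rw [hEdef]
    apply Finset.sup_le
    intro k hk
    have h1 : k - lam Y k ≤ D := Finset.le_sup (f := fun k => k - lam Y k) hk
    have := hge1 k hk
    omega
  -- 1 ≤ D → D + 1 ≤ E
  have hB : 1 ≤ D → D + 1 ≤ E := by
    intro hD1
    rcases Finset.Icc 1 p |>.eq_empty_or_nonempty with he | hne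
    · rw [hDdef, Dp, he] at hD1; simp at hD1
    · obtain ⟨k₀, hk₀mem, hk₀⟩ := Finset.exists_mem_eq_sup (Finset.Icc 1 p) hne
        (fun k => k - lam Y k)
      have hDk : D = k₀ - lam Y k₀ := hk₀
      have hl := hge1 k₀ hk₀mem
      have h2 : k₀ - (lam Y k₀ - 1) ≤ E := Finset.le_sup (f := fun k => k - (lam Y k - 1)) hk₀mem
      omega
  -- 2 ≤ E → D = E - 1
  have hC : 2 ≤ E → D = E - 1 := by
    intro hE2
    rcases Finset.Icc 1 p |>.eq_empty_or_nonempty with he | hne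
    · rw [hEdef, he] at hE2; simp at hE2
    · obtain ⟨k₁, hk₁mem, hk₁⟩ := Finset.exists_mem_eq_sup (Finset.Icc 1 p) hne
        (fun k => k - (lam Y k - 1))
      have hEk : E = k₁ - (lam Y k₁ - 1) := hk₁
      have hl1 := hge1 k₁ hk₁mem
      have hge : E - 1 ≤ D := by
        have : k₁ - lam Y k₁ ≤ D := Finset.le_sup (f := fun k => k - lam Y k) hk₁mem
        omega
      have hle : D ≤ E - 1 := by
        rw [hDdef, Dp]
        apply Finset.sup_le
        intro k hk
        have h2 : k - (lam Y k - 1) ≤ E := Finset.le_sup (f := fun k => k - (lam Y k - 1)) hk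
        have := hge1 k hk
        omega
      omega
  rw [hD']
  refine ⟨fun h => by have := hB h; omega, fun h => by omega, fun h => hC h, ?_⟩
  · intro h
    by_contra hne
    have := hB (by omega)
    omega

-- column deletion / addition

noncomputable def colShrink (Y : Finset (ℕ × ℕ)) : Finset (ℕ × ℕ) :=
  Y.image (fun x => (x.1 - 1, x.2 - 1))

noncomputable def colGrow (Y : Finset (ℕ × ℕ)) : Finset (ℕ × ℕ) :=
  Y.image (fun x => (x.1 + 1, x.2 + 1))

lemma mem_colGrow {Y : Finset (ℕ × ℕ)} {i j : ℕ} :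
    (i, j) ∈ colGrow Y ↔ ((i - 1, j - 1) ∈ Y ∧ 1 ≤ i ∧ 1 ≤ j) := by
  unfold colGrow
  rw [Finset.mem_image]
  constructor
  · rintro ⟨x, hx, hxe⟩
    have h1 : x.1 + 1 = i := congrArg Prod.fst hxe
    have h2 : x.2 + 1 = j := congrArg Prod.snd hxe
    have : x = (i - 1, j - 1) := Prod.ext (by omega) (by omega)
    rw [← this]
    exact ⟨hx, by omega, by omega⟩
  · rintro ⟨hx, hi, hj⟩
    exact ⟨(i - 1, j - 1), hx, Prod.ext (by simp; omega) (by simp; omega)⟩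

lemma mem_colShrink {Y : Finset (ℕ × ℕ)} (hc : ∀ x ∈ Y, 2 ≤ x.1 ∧ 2 ≤ x.2) {i j : ℕ} :
    (i, j) ∈ colShrink Y ↔ (i + 1, j + 1) ∈ Y := by
  unfold colShrink
  rw [Finset.mem_image]
  constructor
  · rintro ⟨x, hx, hxe⟩
    have hcx := hc x hx
    have h1 : x.1 - 1 = i := congrArg Prod.fst hxe
    have h2 : x.2 - 1 = j := congrArg Prod.snd hxe
    have : x = (i + 1, j + 1) := Prod.ext (by omega) (by omega)
    rwa [← this]
  · intro hx
    exact ⟨(i + 1, j + 1), hx, Prod.ext (by simp) (by simp)⟩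

lemma col_coords {p q : ℕ} {Y : Finset (ℕ × ℕ)} (hY : IsLowerIdeal (p + 1) q Y)
    (hb : (1, p + 2) ∉ Y) : ∀ x ∈ Y, 2 ≤ x.1 ∧ 2 ≤ x.2 := by
  rintro ⟨i, j⟩ hx
  have hxP := mem_P.1 (hY.1 hx)
  simp only at hxP
  constructor
  · by_contra hlt
    have hi1 : i = 1 := by omega
    subst hi1
    exact hb (ideal_closed hY hx le_rfl le_rfl (by omega) (by omega) (by omega))
  · omega

lemma colShrink_ideal {p q : ℕ} {Y : Finset (ℕ × ℕ)} (hY : IsLowerIdeal (p + 1) q Y)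
    (hb : (1, p + 2) ∉ Y) : IsLowerIdeal p q (colShrink Y) := by
  have hc := col_coords hY hb
  constructor
  · rintro ⟨i, j⟩ hx
    rw [mem_colShrink hc] at hx
    have h2 := hc _ hx
    have := mem_P.1 (hY.1 hx)
    simp only at this h2
    rw [mem_P]
    simp only
    omega
  · rintro ⟨i, j⟩ hx ⟨i', j'⟩ hy ⟨hle1, hle2⟩
    rw [mem_P] at hx
    rw [mem_colShrink hc] at hy ⊢
    simp only at hx hle1 hle2
    exact ideal_closed hY hy (by omega) (by omega) (by omega) (by omega) (by omega)

lemma colGrow_ideal {p q : ℕ} {Y : Finset (ℕ × ℕ)} (hY : IsLowerIdeal p q Y) :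
    IsLowerIdeal (p + 1) q (colGrow Y) ∧ (1, p + 2) ∉ colGrow Y := by
  refine ⟨⟨?_, ?_⟩, ?_⟩
  · rintro ⟨i, j⟩ hx
    rw [mem_colGrow] at hx
    have := mem_P.1 (hY.1 hx.1)
    simp only at this
    rw [mem_P]
    simp only
    omega
  · rintro ⟨i, j⟩ hx ⟨i', j'⟩ hy ⟨hle1, hle2⟩
    rw [mem_P] at hx
    rw [mem_colGrow] at hy ⊢
    simp only at hx hle1 hle2
    obtain ⟨hy', hyi, hyj⟩ := hy
    have hyP := mem_P.1 (hY.1 hy')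
    simp only at hyP
    refine ⟨ideal_closed hY hy' (by omega) (by omega) (by omega) (by omega) (by omega), by omega, by omega⟩
  · intro hmem
    rw [mem_colGrow] at hmem
    have := mem_P.1 (hY.1 hmem.1)
    simp only at this
    omega

lemma colGrow_colShrink {p q : ℕ} {Y : Finset (ℕ × ℕ)} (hY : IsLowerIdeal (p + 1) q Y)
    (hb : (1, p + 2) ∉ Y) : colGrow (colShrink Y) = Y := by
  have hc := col_coords hY hb
  apply Finset.ext
  rintro ⟨i, j⟩
  rw [mem_colGrow]
  constructor
  · rintro ⟨hx, hi, hj⟩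
    rw [mem_colShrink hc] at hx
    have : (i - 1 + 1, j - 1 + 1) = (i, j) := Prod.ext (by simp; omega) (by simp; omega)
    rwa [this] at hx
  · intro hx
    have hcx := hc _ hx
    refine ⟨?_, by omega, by omega⟩
    rw [mem_colShrink hc]
    have : (i - 1 + 1, j - 1 + 1) = (i, j) := Prod.ext (by simp; omega) (by simp; omega)
    rwa [this]

lemma colShrink_colGrow {Y : Finset (ℕ × ℕ)} : colShrink (colGrow Y) = Y := by
  unfold colShrink colGrow
  rw [Finset.image_image]
  have : Y.image ((fun x : ℕ × ℕ => (x.1 - 1, x.2 - 1)) ∘ fun x => (x.1 + 1, x.2 + 1)) = Y.image id := by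
    apply Finset.image_congr
    intro x _
    simp
  rw [this, Finset.image_id]

lemma colShrink_width {p q m : ℕ} {Y : Finset (ℕ × ℕ)} (hY : IsLowerIdeal (p + 1) q Y)
    (hb : (1, p + 2) ∉ Y) (hw : WidthIs Y m) : WidthIs (colShrink Y) m := by
  have hc := col_coords hY hb
  apply widthIs_image
  · intro a ha b hb' hab
    have h1 := hc a ha
    have h2 := hc b hb'
    have e1 : a.1 - 1 = b.1 - 1 := congrArg Prod.fst hab
    have e2 : a.2 - 1 = b.2 - 1 := congrArg Prod.snd hab
    exact Prod.ext (by omega) (by omega)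
  · intro a ha b hb'
    have h1 := hc a ha
    have h2 := hc b hb'
    unfold le
    simp only
    omega
  · exact hw

lemma colGrow_width {m : ℕ} {Y : Finset (ℕ × ℕ)} (hw : WidthIs Y m) :
    WidthIs (colGrow Y) m := by
  apply widthIs_image
  · intro a ha b hb hab
    have e1 : a.1 + 1 = b.1 + 1 := congrArg Prod.fst hab
    have e2 : a.2 + 1 = b.2 + 1 := congrArg Prod.snd hab
    exact Prod.ext (by omega) (by omega)
  · intro a _ b _
    unfold le
    simp only
    omega
  · exact hw

-- symmetry map

lemma sig_ideal {p q : ℕ} {Y : Finset (ℕ × ℕ)} (hY : IsLowerIdeal p q Y) :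
    IsLowerIdeal q p (Y.image (fun x : ℕ × ℕ => (p + q + 1 - x.2, p + q + 1 - x.1))) := by
  constructor
  · intro z hz
    rw [Finset.mem_image] at hz
    obtain ⟨x, hx, rfl⟩ := hz
    have hxP := mem_P.1 (hY.1 hx)
    rw [mem_P]
    simp only
    omega
  · rintro ⟨a, b⟩ hz y' hy' hle
    rw [Finset.mem_image] at hy'
    obtain ⟨y, hy, rfl⟩ := hy'
    have hyP := mem_P.1 (hY.1 hy)
    rw [mem_P] at hz
    simp only at hz hyP
    unfold le at hle
    simp only at hle
    have hxP : (p + q + 1 - b, p + q + 1 - a) ∈ P p q := by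
      rw [mem_P]; simp only; omega
    have hlex : le (p + q + 1 - b, p + q + 1 - a) y := by
      unfold le; simp only; omega
    have hmem : (p + q + 1 - b, p + q + 1 - a) ∈ Y := hY.2 _ hxP y hy hlex
    rw [Finset.mem_image]
    exact ⟨_, hmem, Prod.ext (by simp only; omega) (by simp only; omega)⟩

lemma sig_width {p q m : ℕ} {Y : Finset (ℕ × ℕ)} (hY : IsLowerIdeal p q Y)
    (hw : WidthIs Y m) :
    WidthIs (Y.image (fun x : ℕ × ℕ => (p + q + 1 - x.2, p + q + 1 - x.1))) m := by
  apply widthIs_image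
  · intro a ha b hb hab
    have h1 := mem_P.1 (hY.1 ha)
    have h2 := mem_P.1 (hY.1 hb)
    have e1 : p + q + 1 - a.2 = p + q + 1 - b.2 := congrArg Prod.fst hab
    have e2 : p + q + 1 - a.1 = p + q + 1 - b.1 := congrArg Prod.snd hab
    exact Prod.ext (by omega) (by omega)
  · intro a ha b hb
    have h1 := mem_P.1 (hY.1 ha)
    have h2 := mem_P.1 (hY.1 hb)
    unfold le
    simp only
    omega
  · exact hw

lemma sig_sig {p q : ℕ} {Y : Finset (ℕ × ℕ)} (hYP : Y ⊆ P p q) :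
    (Y.image (fun x : ℕ × ℕ => (p + q + 1 - x.2, p + q + 1 - x.1))).image
      (fun x : ℕ × ℕ => (p + q + 1 - x.2, p + q + 1 - x.1)) = Y := by
  rw [Finset.image_image]
  have h : Y.image ((fun x : ℕ × ℕ => (p + q + 1 - x.2, p + q + 1 - x.1)) ∘
      (fun x : ℕ × ℕ => (p + q + 1 - x.2, p + q + 1 - x.1))) = Y.image id := by
    apply Finset.image_congr
    intro x hx
    have := mem_P.1 (hYP hx)
    simp only [Function.comp_apply, id_eq]
    exact Prod.ext (by simp only; omega) (by simp only; omega)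
  rw [h, Finset.image_id]

-- counting infrastructure

def S (p q m : ℕ) : Set (Finset (ℕ × ℕ)) := {Y | IsLowerIdeal p q Y ∧ WidthIs Y m}

lemma S_finite (p q m : ℕ) : (S p q m).Finite := by
  apply Set.Finite.subset (Finset.finite_toSet (P p q).powerset)
  intro Y hY
  simp only [Finset.coe_powerset, Set.mem_preimage, Set.mem_powerset_iff,
    Finset.coe_subset]
  exact hY.1.1

lemma w_eq (p q m : ℕ) : w p q m = (S p q m).ncard := by
  rw [w, ← Nat.card_coe_set_eq]
  rfl

lemma ncard_eq_of_maps {α : Type*} {S T : Set α} (φ ψ : α → α)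
    (hST : ∀ Y ∈ S, φ Y ∈ T) (hTS : ∀ Y ∈ T, ψ Y ∈ S)
    (hl : ∀ Y ∈ S, ψ (φ Y) = Y) (hr : ∀ Y ∈ T, φ (ψ Y) = Y) :
    S.ncard = T.ncard := by
  have himg : φ '' S = T := by
    apply Set.Subset.antisymm
    · rintro _ ⟨Y, hY, rfl⟩
      exact hST Y hY
    · intro Y hY
      exact ⟨ψ Y, hTS Y hY, hr Y hY⟩
  have hinj : Set.InjOn φ S := by
    intro a ha b hb hab
    rw [← hl a ha, hab, hl b hb]
  rw [← himg, Set.ncard_image_of_injOn hinj]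

-- symmetry

lemma w_symm (p q m : ℕ) : w p q m = w q p m := by
  rw [w_eq, w_eq]
  have hfe : (fun x : ℕ × ℕ => (q + p + 1 - x.2, q + p + 1 - x.1))
      = (fun x : ℕ × ℕ => (p + q + 1 - x.2, p + q + 1 - x.1)) :=
    congrArg (fun n => (fun x : ℕ × ℕ => (n + 1 - x.2, n + 1 - x.1))) (Nat.add_comm q p)
  apply ncard_eq_of_maps
    (φ := fun Y => Y.image (fun x : ℕ × ℕ => (p + q + 1 - x.2, p + q + 1 - x.1)))
    (ψ := fun Y => Y.image (fun x : ℕ × ℕ => (p + q + 1 - x.2, p + q + 1 - x.1)))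
  · intro Y hY
    exact ⟨sig_ideal hY.1, sig_width hY.1 hY.2⟩
  · intro Y hY
    have h1 := sig_ideal hY.1
    have h2 := sig_width hY.1 hY.2
    rw [hfe] at h1 h2
    exact ⟨h1, h2⟩
  · intro Y hY
    exact sig_sig hY.1.1
  · intro Y hY
    have := sig_sig (p := q) (q := p) hY.1.1
    rwa [hfe] at this

-- recursion

lemma w_rec {p q m : ℕ} (hm : m < p) (hq : 1 ≤ q) :
    w p q m = w (p - 1) q m + (if m = 0 then 0 else w p (q - 1) (m - 1)) := by
  obtain ⟨p', rfl⟩ : ∃ p', p = p' + 1 := ⟨p - 1, by omega⟩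
  obtain ⟨q', rfl⟩ : ∃ q', q = q' + 1 := ⟨q - 1, by omega⟩
  simp only [Nat.add_sub_cancel]
  set T : Set (Finset (ℕ × ℕ)) := {Y | (1, p' + 1 + 1) ∈ Y} with hT
  have hsplit := Set.ncard_inter_add_ncard_diff_eq_ncard (S (p' + 1) (q' + 1) m) T
    (S_finite _ _ _)
  have hA : (S (p' + 1) (q' + 1) m \ T).ncard = (S p' (q' + 1) m).ncard := by
    apply ncard_eq_of_maps (φ := colShrink) (ψ := colGrow)
    · rintro Y ⟨⟨hY, hw⟩, hb⟩
      have hb' : (1, p' + 2) ∉ Y := hb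
      exact ⟨colShrink_ideal hY hb', colShrink_width hY hb' hw⟩
    · rintro Y ⟨hY, hw⟩
      obtain ⟨hideal, hnb⟩ := colGrow_ideal hY
      exact ⟨⟨hideal, colGrow_width hw⟩, hnb⟩
    · rintro Y ⟨⟨hY, hw⟩, hb⟩
      exact colGrow_colShrink hY hb
    · rintro Y ⟨hY, hw⟩
      exact colShrink_colGrow
  have hB : (S (p' + 1) (q' + 1) m ∩ T).ncard
      = (if m = 0 then 0 else w (p' + 1) q' (m - 1)) := by
    rcases Nat.eq_zero_or_pos m with rfl | hm1
    · simp only [if_pos rfl]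
      have : S (p' + 1) (q' + 1) 0 ∩ T = ∅ := by
        apply Set.eq_empty_of_forall_notMem
        rintro Y ⟨⟨hY, hw⟩, hb⟩
        exact widthIs_zero_not_mem hw hb
      rw [this, Set.ncard_empty]
      simp
    · rw [if_neg (by omega), w_eq]
      apply ncard_eq_of_maps (φ := shrink (p' + 1)) (ψ := grow (p' + 1))
      · rintro Y ⟨⟨hY, hw⟩, hb⟩
        have hb' : (1, p' + 1 + 1) ∈ Y := hb
        have hD := (widthIs_iff hY).1 hw
        have hDle := Dp_le (p' + 1) Y
        have hD1 : 1 ≤ Dp (p' + 1) Y := by omega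
        have hrel := (Dp_shrink_rel hY hb').1 hD1
        refine ⟨shrink_ideal hY, (widthIs_iff (shrink_ideal hY)).2 ?_⟩
        rw [hrel]
        omega
      · rintro Y ⟨hY, hw⟩
        obtain ⟨hideal, hb'⟩ := grow_ideal (by omega) hY
        have hE := (widthIs_iff hY).1 hw
        have hEle := Dp_le (p' + 1) Y
        have hE2 : 2 ≤ Dp (p' + 1) Y := by omega
        have hsg : shrink (p' + 1) (grow (p' + 1) Y) = Y := shrink_grow hY.1
        have hrel := (Dp_shrink_rel hideal hb').2.2.1 (by rw [hsg]; exact hE2)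
        rw [hsg] at hrel
        refine ⟨⟨hideal, (widthIs_iff hideal).2 ?_⟩, hb'⟩
        rw [hrel]
        omega
      · rintro Y ⟨⟨hY, hw⟩, hb⟩
        exact grow_shrink hY hb
      · rintro Y ⟨hY, hw⟩
        exact shrink_grow hY.1
  rw [w_eq, w_eq, ← hsplit, hA, hB]
  omega

-- full width recursion

lemma w_full {p q : ℕ} (hp : 1 ≤ p) (hq : 1 ≤ q) :
    w p q p = w p (q - 1) p + w p (q - 1) (p - 1) := by
  obtain ⟨q', rfl⟩ : ∃ q', q = q' + 1 := ⟨q - 1, by omega⟩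
  simp only [Nat.add_sub_cancel]
  have hbmem : ∀ Y, Y ∈ S p (q' + 1) p → (1, p + 1) ∈ Y ∧ Dp p Y = 0 := by
    rintro Y ⟨hY, hw⟩
    have hD := (widthIs_iff hY).1 hw
    have hDle := Dp_le p Y
    have hD0 : Dp p Y = 0 := by omega
    have hl1 : 1 - lam Y 1 ≤ Dp p Y :=
      Finset.le_sup (f := fun k => k - lam Y k) (Finset.mem_Icc.2 ⟨le_rfl, hp⟩)
    have hlam : 1 ≤ lam Y 1 := by omega
    exact ⟨(lam_spec hY le_rfl hp 1 le_rfl).2 hlam, hD0⟩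
  have hU : (S p (q' + 1) p).ncard = (S p q' p ∪ S p q' (p - 1)).ncard := by
    apply ncard_eq_of_maps (φ := shrink p) (ψ := grow p)
    · intro Y hYS
      obtain ⟨hb, hD0⟩ := hbmem Y hYS
      obtain ⟨hY, hw⟩ := hYS
      have hrel := (Dp_shrink_rel hY hb).2.1 hD0
      have hsi := shrink_ideal hY
      rcases Nat.eq_zero_or_pos (Dp p (shrink p Y)) with h0 | h1
      · exact Or.inl ⟨hsi, (widthIs_iff hsi).2 (by omega)⟩
      · exact Or.inr ⟨hsi, (widthIs_iff hsi).2 (by omega)⟩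
    · intro Y hYS
      have hY : IsLowerIdeal p q' Y := by
        rcases hYS with ⟨hY, _⟩ | ⟨hY, _⟩ <;> exact hY
      have hE1 : Dp p Y ≤ 1 := by
        have hEle := Dp_le p Y
        rcases hYS with ⟨hY', hw⟩ | ⟨hY', hw⟩ <;>
          · have := (widthIs_iff hY').1 hw
            omega
      obtain ⟨hideal, hb'⟩ := grow_ideal hp hY
      have hsg : shrink p (grow p Y) = Y := shrink_grow hY.1
      have hrel := (Dp_shrink_rel hideal hb').2.2.2 (by rw [hsg]; exact hE1)
      refine ⟨hideal, (widthIs_iff hideal).2 ?_⟩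
      rw [hrel]
      omega
    · intro Y hYS
      obtain ⟨hb, _⟩ := hbmem Y hYS
      exact grow_shrink hYS.1 hb
    · intro Y hYS
      have hY : IsLowerIdeal p q' Y := by
        rcases hYS with ⟨hY, _⟩ | ⟨hY, _⟩ <;> exact hY
      exact shrink_grow hY.1
  have hdisj : Disjoint (S p q' p) (S p q' (p - 1)) := by
    rw [Set.disjoint_left]
    rintro Y ⟨hY, hw⟩ ⟨hY', hw'⟩
    have := widthIs_unique hw hw'
    omega
  rw [w_eq, w_eq, w_eq, hU, Set.ncard_union_eq hdisj (S_finite _ _ _) (S_finite _ _ _)]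

/-- `w_{p,q}` is symmetric in `p, q` and for `p ≤ q` satisfies the recursion
`w_{p,q}(m) = w_{p−1,q}(m) + w_{p,q−1}(m−1)` for `m < p` (with
`w_{p,q-1}(−1) = 0`) and `w_{p,q}(p) = w_{p,q−1}(p) + w_{p,q−1}(p−1)`. -/
theorem w_recursion :
    (∀ p q m : ℕ, w p q m = w q p m) ∧
    (∀ p q m : ℕ, p ≤ q → m < p →
      w p q m = w (p - 1) q m + (if m = 0 then 0 else w p (q - 1) (m - 1))) ∧
    (∀ p q : ℕ, 1 ≤ p → p ≤ q →
      w p q p = w p (q - 1) p + w p (q - 1) (p - 1)) := by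
  refine ⟨w_symm, ?_, ?_⟩
  · intro p q m hpq hm
    exact w_rec hm (by omega)
  · intro p q hp hpq
    exact w_full hp (by omega)
end Stmt7
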